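/- Let X be a Dedekind complete pre-Riesz space, let J be a nonempty directed index set, and let (P_j)_{j ∈ J} be a family of band projections on X such that P_j ≤ P_i whenever j ≥ i (a decreasing net). Then there exists a band projection P₀ on X such that: (a) for each x ∈ X₊, P₀x is the infimum of the set {P_j x : j ∈ J} (i.e. the net (P_j x) decreases to P₀x); and (b) the range of P₀ equals ⋂_{j ∈ J} P_j X. -/

import Mathlib

open Pointwise

variable {X : Type*} [AddCommGroup X] [PartialOrder X] [IsOrderedAddMonoid X] [Module ℝ X]
    [PosSMulStrictMono ℝ X] [PosSMulReflectLT ℝ X]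

/-- Two elements of an ordered vector space are disjoint if the sets `{x+y, -x-y}` and
`{x-y, y-x}` have the same set of upper bounds. -/
def UDisjoint (x y : X) : Prop :=
  upperBounds ({x + y, -x - y} : Set X) = upperBounds ({x - y, y - x} : Set X)

/-- The disjoint complement `S^⊥` of a set `S`. -/
def dComp (S : Set X) : Set X := {x : X | ∀ s ∈ S, UDisjoint x s}

/-- A band: a set equal to its double disjoint complement. -/
def IsBand (B : Set X) : Prop := B = dComp (dComp B)

/-- A projection band: a band `B` with `B ∩ B^⊥ = {0}` and `B + B^⊥ = X`. -/
def IsProjBand (B : Set X) : Prop :=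
  IsBand B ∧ B ∩ dComp B = {0} ∧ ∀ x : X, ∃ b ∈ B, ∃ c ∈ dComp B, x = b + c

/-- A positive linear operator. -/
def IsPosMap (T : X →ₗ[ℝ] X) : Prop := ∀ x : X, 0 ≤ x → 0 ≤ T x

/-- A band projection: a linear projection whose range is a projection band and whose
kernel is the disjoint complement of the range. -/
def IsBandProj (P : X →ₗ[ℝ] X) : Prop :=
  P ∘ₗ P = P ∧ IsProjBand (Set.range ⇑P) ∧ (LinearMap.ker P : Set X) = dComp (Set.range ⇑P)

/-- A pre-Riesz space: for every nonempty finite `A ⊆ X` and every `x`, if the upper bounds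
of `x + A` are contained in the upper bounds of `A`, then `x ≥ 0`. -/
def IsPreRiesz (X : Type*) [AddCommGroup X] [PartialOrder X] [IsOrderedAddMonoid X] [Module ℝ X]
    [PosSMulStrictMono ℝ X] [PosSMulReflectLT ℝ X] : Prop :=
  ∀ (A : Set X) (x : X), A.Finite → A.Nonempty →
    upperBounds ((x + ·) '' A) ⊆ upperBounds A → 0 ≤ x

set_option maxHeartbeats 1000000

lemma mem_ub_pair {a b u : X} : u ∈ upperBounds ({a, b} : Set X) ↔ a ≤ u ∧ b ≤ u := by
  simp [upperBounds]

lemma half_nonneg' {b : X} (h : 0 ≤ b + b) : 0 ≤ b := by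
  have h2 : (0:X) ≤ ((2:ℝ)⁻¹) • (b + b) := smul_nonneg (by norm_num) h
  have : ((2:ℝ)⁻¹) • (b + b) = b := by
    rw [← two_smul ℝ b, smul_smul]; norm_num
  rwa [this] at h2

/-- range and kernel elements of a positive projection are disjoint -/
lemma disj_of_proj (P : X →ₗ[ℝ] X)
    (hpos : ∀ x : X, 0 ≤ x → 0 ≤ P x) (hneg : ∀ x : X, 0 ≤ x → P x ≤ x)
    {b c : X} (hb : P b = b) (hc : P c = 0) : UDisjoint b c := by
  unfold UDisjoint
  ext u
  rw [mem_ub_pair, mem_ub_pair]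
  constructor
  · rintro ⟨h1, h2⟩
    have k1 : (0:X) ≤ u - b - c := by
      calc (0:X) ≤ u - (b + c) := sub_nonneg.mpr h1
        _ = u - b - c := by abel
    have k2 : (0:X) ≤ u + b + c := by
      calc (0:X) ≤ u - (-b - c) := sub_nonneg.mpr h2
        _ = u + b + c := by abel
    have p1 : (0:X) ≤ P u - b := by
      have := hpos _ k1; simpa [map_sub, hb, hc] using this
    have p2 : (0:X) ≤ P u + b := by
      have := hpos _ k2; simpa [map_add, hb, hc] using this
    have q1 : (0:X) ≤ u - P u - c := by
      have := hneg _ k1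
      have e : P (u - b - c) = P u - b := by simp [map_sub, hb, hc]
      rw [e] at this
      calc (0:X) = (u - b - c) - (u - b - c) := by abel
        _ ≤ (u - b - c) - (P u - b) := by exact sub_le_sub_left this _
        _ = u - P u - c := by abel
    have q2 : (0:X) ≤ u - P u + c := by
      have := hneg _ k2
      have e : P (u + b + c) = P u + b := by simp [map_add, hb, hc]
      rw [e] at this
      calc (0:X) = (u + b + c) - (u + b + c) := by abel
        _ ≤ (u + b + c) - (P u + b) := sub_le_sub_left this _
        _ = u - P u + c := by abel
    constructor
    · have : (0:X) ≤ u - (b - c) := by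
        calc (0:X) ≤ (u - P u + c) + (P u - b) := add_nonneg q2 p1
          _ = u - (b - c) := by abel
      exact sub_nonneg.mp this
    · have : (0:X) ≤ u - (c - b) := by
        calc (0:X) ≤ (u - P u - c) + (P u + b) := add_nonneg q1 p2
          _ = u - (c - b) := by abel
      exact sub_nonneg.mp this
  · rintro ⟨h1, h2⟩
    have k1 : (0:X) ≤ u - b + c := by
      have : (0:X) ≤ u - (b - c) := sub_nonneg.mpr h1
      calc (0:X) ≤ u - (b - c) := this
        _ = u - b + c := by abel
    have k2 : (0:X) ≤ u + b - c := by
      have : (0:X) ≤ u - (c - b) := sub_nonneg.mpr h2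
      calc (0:X) ≤ u - (c - b) := this
        _ = u + b - c := by abel
    have p1 : (0:X) ≤ P u - b := by
      have := hpos _ k1; simpa [map_sub, map_add, hb, hc] using this
    have p2 : (0:X) ≤ P u + b := by
      have := hpos _ k2; simpa [map_sub, map_add, hb, hc] using this
    have q1 : (0:X) ≤ u - P u + c := by
      have := hneg _ k1
      have e : P (u - b + c) = P u - b := by simp [map_sub, map_add, hb, hc]
      rw [e] at this
      calc (0:X) = (u - b + c) - (u - b + c) := by abel
        _ ≤ (u - b + c) - (P u - b) := sub_le_sub_left this _
        _ = u - P u + c := by abel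
    have q2 : (0:X) ≤ u - P u - c := by
      have := hneg _ k2
      have e : P (u + b - c) = P u + b := by simp [map_sub, map_add, hb, hc]
      rw [e] at this
      calc (0:X) = (u + b - c) - (u + b - c) := by abel
        _ ≤ (u + b - c) - (P u + b) := sub_le_sub_left this _
        _ = u - P u - c := by abel
    constructor
    · have : (0:X) ≤ u - (b + c) := by
        calc (0:X) ≤ (P u - b) + (u - P u - c) := add_nonneg p1 q2
          _ = u - (b + c) := by abel
      exact sub_nonneg.mp this
    · have : (0:X) ≤ u - (-b - c) := by
        calc (0:X) ≤ (P u + b) + (u - P u + c) := add_nonneg p2 q1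
          _ = u - (-b - c) := by abel
      exact sub_nonneg.mp this


lemma udisj_symm' {x y : X} (h : UDisjoint x y) : UDisjoint y x := by
  unfold UDisjoint at *
  have e1 : ({y + x, -y - x} : Set X) = {x + y, -x - y} := by
    rw [add_comm y x]; congr 1; abel_nf
  have e2 : ({y - x, x - y} : Set X) = {x - y, y - x} := Set.pair_comm _ _
  rw [e1, e2, h]

/-- Key lemma: if `y` is disjoint from `P y` for a positive projection `P`
on a pre-Riesz space, then `P y = 0`. -/
lemma key_lemma (hX : IsPreRiesz X) (P : X →ₗ[ℝ] X)
    (hidem : ∀ x : X, P (P x) = P x)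
    (hpos : ∀ x : X, 0 ≤ x → 0 ≤ P x) (hneg : ∀ x : X, 0 ≤ x → P x ≤ x)
    {y : X} (hy : UDisjoint y (P y)) : P y = 0 := by
  obtain ⟨b, hbdef⟩ : ∃ b : X, P y = b := ⟨_, rfl⟩
  obtain ⟨c, hcdef⟩ : ∃ c : X, y - b = c := ⟨_, rfl⟩
  have hPb : P b = b := by rw [← hbdef, hidem]
  have hPc : P c = 0 := by rw [← hcdef, map_sub, hbdef, hPb, sub_self]
  have hy' : y = b + c := by rw [← hcdef]; abel
  rw [hbdef] at hy
  have H : upperBounds ({2 • b + c, -(2 • b + c)} : Set X)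
      = upperBounds ({c, -c} : Set X) := by
    have a1 : y + b = 2 • b + c := by rw [hy']; abel
    have a2 : -y - b = -(2 • b + c) := by rw [hy']; abel
    have a3 : y - b = c := by rw [hy']; abel
    have a4 : b - y = -c := by rw [hy']; abel
    have e1 : ({y + b, -y - b} : Set X) = {2 • b + c, -(2 • b + c)} := by rw [a1, a2]
    have e2 : ({y - b, b - y} : Set X) = {c, -c} := by rw [a3, a4]
    have := hy
    unfold UDisjoint at this
    rw [e1, e2] at this
    exact this
  -- facts about any upper bound u of {c, -c}
  have main : ∀ u ∈ upperBounds ({c, -c} : Set X),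
      (0 ≤ P u - 2 • b ∧ 0 ≤ P u + 2 • b ∧ 0 ≤ u - P u - c ∧ 0 ≤ u - P u + c) := by
    intro u hu
    obtain ⟨hc1, hc2⟩ := mem_ub_pair.mp hu
    obtain ⟨h1, h2⟩ := mem_ub_pair.mp
      (H ▸ hu : u ∈ upperBounds ({2 • b + c, -(2 • b + c)} : Set X))
    have P2b : P (2 • b) = 2 • b := by rw [map_nsmul, hPb]
    have p1 : (0:X) ≤ P u - 2 • b := by
      have k : (0:X) ≤ u - (2 • b + c) := sub_nonneg.mpr h1
      have := hpos _ k
      have e : P (u - (2 • b + c)) = P u - 2 • b := by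
        rw [map_sub, map_add, P2b, hPc]; abel
      rw [e] at this; exact this
    have p2 : (0:X) ≤ P u + 2 • b := by
      have k : (0:X) ≤ u + (2 • b + c) := by
        calc (0:X) ≤ u - (-(2 • b + c)) := sub_nonneg.mpr h2
          _ = u + (2 • b + c) := by abel
      have := hpos _ k
      have e : P (u + (2 • b + c)) = P u + 2 • b := by
        rw [map_add, map_add, P2b, hPc]; abel
      rw [e] at this; exact this
    have q1 : (0:X) ≤ u - P u - c := by
      have k : (0:X) ≤ u - c := sub_nonneg.mpr hc1
      have := hneg _ k
      have e : P (u - c) = P u := by rw [map_sub, hPc]; abel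
      rw [e] at this
      calc (0:X) = (u - c) - (u - c) := by abel
        _ ≤ (u - c) - P u := sub_le_sub_left this _
        _ = u - P u - c := by abel
    have q2 : (0:X) ≤ u - P u + c := by
      have k : (0:X) ≤ u + c := by
        calc (0:X) ≤ u - (-c) := sub_nonneg.mpr hc2
          _ = u + c := by abel
      have := hneg _ k
      have e : P (u + c) = P u := by rw [map_add, hPc]; abel
      rw [e] at this
      calc (0:X) = (u + c) - (u + c) := by abel
        _ ≤ (u + c) - P u := sub_le_sub_left this _
        _ = u - P u + c := by abel
    exact ⟨p1, p2, q1, q2⟩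
  have hfin : ∀ a a' : X, ({a, a'} : Set X).Finite :=
    fun a a' => (Set.finite_singleton _).insert _
  -- 0 ≤ 2b : pre-Riesz with A = {-2b+c, -2b-c}, shift 2b
  have hb1 : (0:X) ≤ 2 • b := by
    apply hX ({-(2 • b) + c, -(2 • b) - c} : Set X) (2 • b) (hfin _ _) ⟨_, Set.mem_insert _ _⟩
    intro u hu
    have him : ((2 • b + ·) '' {-(2 • b) + c, -(2 • b) - c} : Set X) = {c, -c} := by
      rw [Set.image_insert_eq, Set.image_singleton]
      have a1 : 2 • b + (-(2 • b) + c) = c := by abel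
      have a2 : 2 • b + (-(2 • b) - c) = -c := by abel
      rw [a1, a2]
    rw [him] at hu
    obtain ⟨p1, p2, q1, q2⟩ := main u hu
    rw [mem_ub_pair]
    constructor
    · have : (0:X) ≤ u - (-(2 • b) + c) := by
        calc (0:X) ≤ (P u + 2 • b) + (u - P u - c) := add_nonneg p2 q1
          _ = u - (-(2 • b) + c) := by abel
      exact sub_nonneg.mp this
    · have : (0:X) ≤ u - (-(2 • b) - c) := by
        calc (0:X) ≤ (P u + 2 • b) + (u - P u + c) := add_nonneg p2 q2
          _ = u - (-(2 • b) - c) := by abel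
      exact sub_nonneg.mp this
  -- 0 ≤ -2b : pre-Riesz with A = {2b+c, 2b-c}, shift -2b
  have hb2 : (0:X) ≤ -(2 • b) := by
    apply hX ({2 • b + c, 2 • b - c} : Set X) (-(2 • b)) (hfin _ _) ⟨_, Set.mem_insert _ _⟩
    intro u hu
    have him : ((-(2 • b) + ·) '' {2 • b + c, 2 • b - c} : Set X) = {c, -c} := by
      rw [Set.image_insert_eq, Set.image_singleton]
      have a1 : -(2 • b) + (2 • b + c) = c := by abel
      have a2 : -(2 • b) + (2 • b - c) = -c := by abel
      rw [a1, a2]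
    rw [him] at hu
    obtain ⟨p1, p2, q1, q2⟩ := main u hu
    rw [mem_ub_pair]
    constructor
    · have : (0:X) ≤ u - (2 • b + c) := by
        calc (0:X) ≤ (P u - 2 • b) + (u - P u - c) := add_nonneg p1 q1
          _ = u - (2 • b + c) := by abel
      exact sub_nonneg.mp this
    · have : (0:X) ≤ u - (2 • b - c) := by
        calc (0:X) ≤ (P u - 2 • b) + (u - P u + c) := add_nonneg p1 q2
          _ = u - (2 • b - c) := by abel
      exact sub_nonneg.mp this
  have h1 : (0:X) ≤ b := half_nonneg' (by rw [← two_smul ℕ b]; exact hb1)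
  have h2 : b ≤ 0 := by
    have hbb : (0:X) ≤ -b + -b := by
      have : -(2 • b) = -b + -b := by abel
      rwa [this] at hb2
    have := half_nonneg' hbb
    simpa using this
  rw [hbdef]; exact le_antisymm h2 h1


lemma udisj_zero (s : X) : UDisjoint (0:X) s := by
  unfold UDisjoint
  have a1 : (0:X) + s = s := by abel
  have a2 : -(0:X) - s = -s := by abel
  have a3 : (0:X) - s = -s := by abel
  have a4 : s - (0:X) = s := by abel
  rw [a1, a2, a3, a4, Set.pair_comm]

/-- positive idempotents dominated by the identity are band projections -/
lemma bp_of (hX : IsPreRiesz X) (P : X →ₗ[ℝ] X) (h2 : P ∘ₗ P = P)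
    (hpos : ∀ x : X, 0 ≤ x → 0 ≤ P x) (hneg : ∀ x : X, 0 ≤ x → P x ≤ x) :
    IsBandProj P := by
  have hidem : ∀ x : X, P (P x) = P x := fun x => by
    have := LinearMap.ext_iff.mp h2 x; simpa using this
  have hrange : ∀ x : X, x ∈ Set.range ⇑P ↔ P x = x := by
    intro x
    constructor
    · rintro ⟨w, rfl⟩; exact hidem w
    · intro h; exact ⟨x, h⟩
  -- Q = I - P
  set Q : X →ₗ[ℝ] X := LinearMap.id - P with hQ
  have hQapp : ∀ x : X, Q x = x - P x := fun x => rfl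
  have hQidem : ∀ x : X, Q (Q x) = Q x := by
    intro x; rw [hQapp, hQapp, map_sub, hidem]; abel
  have hQpos : ∀ x : X, 0 ≤ x → 0 ≤ Q x := fun x hx => by
    rw [hQapp]; exact sub_nonneg.mpr (hneg x hx)
  have hQneg : ∀ x : X, 0 ≤ x → Q x ≤ x := fun x hx => by
    rw [hQapp]
    calc x - P x ≤ x - 0 := by exact sub_le_sub_left (hpos x hx) x
      _ = x := sub_zero x
  -- kernel = dComp range
  have hker : (LinearMap.ker P : Set X) = dComp (Set.range ⇑P) := by
    ext z
    constructor
    · intro hz s hs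
      have hz' : P z = 0 := hz
      exact udisj_symm' (disj_of_proj P hpos hneg ((hrange s).mp hs) hz')
    · intro hz
      have : UDisjoint z (P z) := hz (P z) ⟨z, rfl⟩
      exact key_lemma hX P hidem hpos hneg this
  -- range = dComp kernel
  have hrk : Set.range ⇑P = dComp (LinearMap.ker P : Set X) := by
    ext z
    constructor
    · intro hz s hs
      exact disj_of_proj P hpos hneg ((hrange z).mp hz) hs
    · intro hz
      have hQz : UDisjoint z (Q z) := by
        apply hz
        show P (Q z) = 0
        rw [hQapp, map_sub, hidem, sub_self]
      have := key_lemma hX Q hQidem hQpos hQneg hQz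
      rw [hQapp] at this
      exact (hrange z).mpr (by rw [sub_eq_zero] at this; exact this.symm)
  refine ⟨h2, ⟨?_, ?_, ?_⟩, hker⟩
  · show Set.range ⇑P = dComp (dComp (Set.range ⇑P))
    rw [← hker, ← hrk]
  · ext z
    simp only [Set.mem_inter_iff, Set.mem_singleton_iff]
    constructor
    · rintro ⟨hz1, hz2⟩
      rw [← hker] at hz2
      have h1 : P z = z := (hrange z).mp hz1
      have h2 : P z = 0 := hz2
      rw [h1] at h2; exact h2
    · rintro rfl
      exact ⟨⟨0, map_zero P⟩, fun s _ => udisj_zero s⟩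
  · intro x
    refine ⟨P x, ⟨x, rfl⟩, x - P x, ?_, by abel⟩
    rw [← hker]
    show P (x - P x) = 0
    rw [map_sub, hidem, sub_self]

/-- a band projection is positive and dominated by the identity -/
lemma pos_of_bp (P : X →ₗ[ℝ] X) (h : IsBandProj P) :
    ∀ x : X, 0 ≤ x → 0 ≤ P x ∧ P x ≤ x := by
  obtain ⟨h2, ⟨-, -, hdecomp⟩, hker⟩ := h
  have hidem : ∀ x : X, P (P x) = P x := fun x => by
    have := LinearMap.ext_iff.mp h2 x; simpa using this
  intro x hx
  obtain ⟨b, hb, c, hc, hxbc⟩ := hdecomp x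
  have hPb : P b = b := by obtain ⟨w, rfl⟩ := hb; exact hidem w
  have hPc : P c = 0 := by
    have : c ∈ (LinearMap.ker P : Set X) := by rw [hker]; exact hc
    exact this
  have hPx : P x = b := by rw [hxbc, map_add, hPb, hPc, add_zero]
  have hdisj : UDisjoint b c := udisj_symm' (hc b hb)
  -- x = b + c ≥ 0 is an upper bound of {b+c, -b-c}
  have hub : x ∈ upperBounds ({b + c, -b - c} : Set X) := by
    rw [mem_ub_pair, ← hxbc]
    constructor
    · exact le_refl x
    · calc -b - c = -(b+c) := by abel
        _ ≤ 0 := neg_nonpos.mpr (hxbc ▸ hx)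
        _ ≤ x := hx
  have hub2 : x ∈ upperBounds ({b - c, c - b} : Set X) := by
    unfold UDisjoint at hdisj
    rw [hdisj] at hub
    exact hub
  obtain ⟨k1, k2⟩ := mem_ub_pair.mp hub2
  -- b - c ≤ x = b + c gives c ≥ 0 ; c - b ≤ b + c gives b ≥ 0
  have hcpos : (0:X) ≤ c := by
    apply half_nonneg'
    have : b - c ≤ b + c := by rw [← hxbc]; exact k1
    calc (0:X) = (b - c) - (b - c) := by abel
      _ ≤ (b + c) - (b - c) := sub_le_sub_right this _
      _ = c + c := by abel
  have hbpos : (0:X) ≤ b := by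
    apply half_nonneg'
    have : c - b ≤ b + c := by rw [← hxbc]; exact k2
    calc (0:X) = (c - b) - (c - b) := by abel
      _ ≤ (b + c) - (c - b) := sub_le_sub_right this _
      _ = b + b := by abel
  constructor
  · rw [hPx]; exact hbpos
  · rw [hPx, hxbc]
    calc b = b + 0 := by abel
      _ ≤ b + c := add_le_add_right hcpos b


/-- pre-Riesz spaces are directed -/
lemma directed_of_pr (hX : IsPreRiesz X) (a b : X) : ∃ u : X, a ≤ u ∧ b ≤ u := by
  by_cases hall : ∀ z : X, 0 ≤ z
  · exact ⟨a + b, by simpa using add_le_add_left (hall b) a, by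
      simpa using add_le_add_right (hall a) b⟩
  · push_neg at hall
    obtain ⟨z, hz⟩ := hall
    by_contra hcon
    push_neg at hcon
    apply hz
    apply hX ({a - z, b - z} : Set X) z ((Set.finite_singleton _).insert _)
      ⟨_, Set.mem_insert _ _⟩
    intro u hu
    exfalso
    have him : ((z + ·) '' {a - z, b - z} : Set X) = {a, b} := by
      rw [Set.image_insert_eq, Set.image_singleton]
      have a1 : z + (a - z) = a := by abel
      have a2 : z + (b - z) = b := by abel
      rw [a1, a2]
    rw [him] at hu
    exact hcon u (hu (Set.mem_insert _ _)) (hu (Set.mem_insert_of_mem _ rfl))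

/-- glb of a decreasing bounded-below net, via Dedekind completeness -/
lemma glb_of_net (hdc : ∀ A : Set X, A.Nonempty → DirectedOn (· ≤ ·) A → BddAbove A → ∃ s, IsLUB A s)
    {J : Type*} [Nonempty J] [Preorder J] (hdir : ∀ i j : J, ∃ k, i ≤ k ∧ j ≤ k)
    (g : J → X) (hg : ∀ i j : J, i ≤ j → g j ≤ g i) (L : X) (hL : ∀ j, L ≤ g j) :
    ∃ s, IsGLB (Set.range g) s := by
  obtain ⟨s, hs⟩ := hdc (Set.range fun j => -(g j))
    (Set.range_nonempty _)
    (by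
      rintro x ⟨i, rfl⟩ y ⟨j, rfl⟩
      obtain ⟨k, hik, hjk⟩ := hdir i j
      exact ⟨-(g k), ⟨k, rfl⟩, neg_le_neg (hg _ _ hik), neg_le_neg (hg _ _ hjk)⟩)
    ⟨-L, by rintro x ⟨j, rfl⟩; exact neg_le_neg (hL j)⟩
  refine ⟨-s, ?_, ?_⟩
  · rintro x ⟨j, rfl⟩
    have : -(g j) ≤ s := hs.1 ⟨j, rfl⟩
    simpa using neg_le_neg this
  · intro c hc
    have : s ≤ -c := hs.2 (by
      rintro x ⟨j, rfl⟩
      exact neg_le_neg (hc ⟨j, rfl⟩))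
    simpa using neg_le_neg this
/-- sum of GLBs of two decreasing nets over a common directed index is GLB of the sum net -/
lemma glb_add {J : Type*} [Preorder J] (hdir : ∀ i j : J, ∃ k, i ≤ k ∧ j ≤ k)
    (g h : J → X) (hg : ∀ i j : J, i ≤ j → g j ≤ g i) (hh : ∀ i j : J, i ≤ j → h j ≤ h i)
    {a b : X} (ha : IsGLB (Set.range g) a) (hb : IsGLB (Set.range h) b) :
    IsGLB (Set.range fun j => g j + h j) (a + b) := by
  constructor
  · rintro x ⟨j, rfl⟩
    exact add_le_add (ha.1 ⟨j, rfl⟩) (hb.1 ⟨j, rfl⟩)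
  · intro c hc
    have key : ∀ k : J, c - h k ≤ a := by
      intro k
      apply ha.2
      rintro x ⟨j, rfl⟩
      obtain ⟨m, hjm, hkm⟩ := hdir j k
      have : c ≤ g m + h m := hc ⟨m, rfl⟩
      calc c - h k ≤ (g m + h m) - h k := sub_le_sub_right this _
        _ ≤ (g j + h k) - h k := sub_le_sub_right (add_le_add (hg _ _ hjm) (hh _ _ hkm)) _
        _ = g j := by abel
    have : c - a ≤ b := by
      apply hb.2
      rintro x ⟨k, rfl⟩
      have := key k
      calc c - a = c - a := rfl
        _ ≤ h k := by
          have : c - h k ≤ a := key k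
          have := sub_le_iff_le_add.mp this
          -- c ≤ a + h k
          calc c - a ≤ (a + h k) - a := sub_le_sub_right this _
            _ = h k := by abel
    calc c = (c - a) + a := by abel
      _ ≤ b + a := add_le_add_left this _
      _ = a + b := by abel


/-- A decreasing net of band projections on a Dedekind complete pre-Riesz space converges
(pointwise on the cone, in order) to a band projection whose range is the intersection of
the ranges. -/
theorem stmt_8 (hX : IsPreRiesz X)
    (hdc : ∀ A : Set X, A.Nonempty → DirectedOn (· ≤ ·) A → BddAbove A → ∃ s, IsLUB A s)
    {J : Type*} [Preorder J] [Nonempty J] (hdir : ∀ i j : J, ∃ k, i ≤ k ∧ j ≤ k)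
    (P : J → (X →ₗ[ℝ] X)) (hP : ∀ j, IsBandProj (P j))
    (hdec : ∀ i j : J, i ≤ j → IsPosMap (P i - P j)) :
    ∃ P₀ : X →ₗ[ℝ] X, IsBandProj P₀ ∧
      (∀ x : X, 0 ≤ x → IsGLB (Set.range fun j => P j x) (P₀ x)) ∧
      Set.range ⇑P₀ = ⋂ j, Set.range ⇑(P j) := by
  classical
  obtain ⟨j₀⟩ := (inferInstance : Nonempty J)
  have hposP : ∀ (j : J) (x : X), 0 ≤ x → 0 ≤ P j x :=
    fun j x hx => (pos_of_bp (P j) (hP j) x hx).1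
  have hnegP : ∀ (j : J) (x : X), 0 ≤ x → P j x ≤ x :=
    fun j x hx => (pos_of_bp (P j) (hP j) x hx).2
  have hidem : ∀ (j : J) (x : X), P j (P j x) = P j x := fun j x => by
    have := LinearMap.ext_iff.mp (hP j).1 x; simpa using this
  have hmono : ∀ {i j : J}, i ≤ j → ∀ x : X, 0 ≤ x → P j x ≤ P i x := by
    intro i j hij x hx
    have h := hdec i j hij x hx
    rw [LinearMap.sub_apply] at h
    exact sub_nonneg.mp h
  have hdecomp : ∀ x : X, ∃ p q : X, 0 ≤ p ∧ 0 ≤ q ∧ x = p - q := by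
    intro x
    obtain ⟨u, hxu, h0u⟩ := directed_of_pr hX x 0
    exact ⟨u, u - x, h0u, sub_nonneg.mpr hxu, by abel⟩
  choose dp dq hdp hdq hde using hdecomp
  -- commutation lemmas
  have comm1 : ∀ {i j : J}, i ≤ j → ∀ x : X, P i (P j x) = P j x := by
    intro i j hij x
    have hpos_case : ∀ y : X, 0 ≤ y → P i (P j y) = P j y := by
      intro y hy
      have h1 : P i (P j y) ≤ P j y := hnegP i _ (hposP j y hy)
      have h2 : P j (P j y) ≤ P i (P j y) := hmono hij _ (hposP j y hy)
      rw [hidem] at h2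
      exact le_antisymm h1 h2
    calc P i (P j x) = P i (P j (dp x)) - P i (P j (dq x)) := by
          rw [← map_sub, ← map_sub, ← hde x]
      _ = P j (dp x) - P j (dq x) := by
          rw [hpos_case _ (hdp x), hpos_case _ (hdq x)]
      _ = P j x := by rw [← map_sub, ← hde x]
  have comm2 : ∀ {i j : J}, i ≤ j → ∀ x : X, P j (P i x) = P j x := by
    intro i j hij x
    have hpos_case : ∀ y : X, 0 ≤ y → P j (P i y) = P j y := by
      intro y hy
      have hz : (0:X) ≤ y - P i y := sub_nonneg.mpr (hnegP i y hy)
      have h1 : (0:X) ≤ P j (y - P i y) := hposP j _ hz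
      have h2 : P j (y - P i y) ≤ P i (y - P i y) := hmono hij _ hz
      have h3 : P i (y - P i y) = 0 := by rw [map_sub, hidem, sub_self]
      rw [h3] at h2
      have h4 : P j (y - P i y) = 0 := le_antisymm h2 h1
      rw [map_sub] at h4
      have := sub_eq_zero.mp h4
      exact this.symm
    calc P j (P i x) = P j (P i (dp x)) - P j (P i (dq x)) := by
          rw [← map_sub, ← map_sub, ← hde x]
      _ = P j (dp x) - P j (dq x) := by
          rw [hpos_case _ (hdp x), hpos_case _ (hdq x)]
      _ = P j x := by rw [← map_sub, ← hde x]
  -- the infimum function on the positive cone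
  have hglb : ∀ x : X, ∃ s : X, 0 ≤ x → IsGLB (Set.range fun j => P j x) s := by
    intro x
    by_cases hx : 0 ≤ x
    · obtain ⟨s, hs⟩ := glb_of_net hdc hdir (fun j => P j x)
        (fun i j hij => hmono hij x hx) 0 (fun j => hposP j x hx)
      exact ⟨s, fun _ => hs⟩
    · exact ⟨0, fun h => absurd h hx⟩
  choose f hf using hglb
  have f_lb : ∀ x : X, 0 ≤ x → ∀ j, f x ≤ P j x := fun x hx j => (hf x hx).1 ⟨j, rfl⟩
  have f_glb2 : ∀ x : X, 0 ≤ x → ∀ c : X, (∀ j, c ≤ P j x) → c ≤ f x := by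
    intro x hx c h
    exact (hf x hx).2 (by rintro _ ⟨j, rfl⟩; exact h j)
  have f_nonneg : ∀ x : X, 0 ≤ x → 0 ≤ f x :=
    fun x hx => f_glb2 x hx 0 fun j => hposP j x hx
  have f_zero : f 0 = 0 := by
    refine le_antisymm ?_ (f_nonneg 0 le_rfl)
    have := f_lb 0 le_rfl j₀
    rwa [map_zero] at this
  have f_add : ∀ p q : X, 0 ≤ p → 0 ≤ q → f (p + q) = f p + f q := by
    intro p q hp hq
    have hMain : IsGLB (Set.range fun j => P j (p + q)) (f p + f q) := by
      constructor
      · rintro _ ⟨j, rfl⟩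
        show f p + f q ≤ P j (p + q)
        rw [map_add]
        exact add_le_add (f_lb p hp j) (f_lb q hq j)
      · intro c hc
        have hc' : ∀ j, c ≤ P j p + P j q := fun j => by
          have h0 : c ≤ P j (p + q) := hc ⟨j, rfl⟩
          rwa [map_add] at h0
        have step1 : ∀ k, c - P k q ≤ f p := by
          intro k
          apply f_glb2 p hp
          intro j
          obtain ⟨m, hjm, hkm⟩ := hdir j k
          calc c - P k q ≤ (P m p + P m q) - P k q := sub_le_sub_right (hc' m) _
            _ ≤ (P j p + P k q) - P k q :=
                sub_le_sub_right (add_le_add (hmono hjm p hp) (hmono hkm q hq)) _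
            _ = P j p := by abel
        have step2 : c - f p ≤ f q := by
          apply f_glb2 q hq
          intro k
          have h1 : c ≤ f p + P k q := sub_le_iff_le_add.mp (step1 k)
          calc c - f p ≤ (f p + P k q) - f p := sub_le_sub_right h1 _
            _ = P k q := by abel
        calc c = (c - f p) + f p := by abel
          _ ≤ f q + f p := add_le_add_left step2 _
          _ = f p + f q := by abel
    exact (hf (p + q) (add_nonneg hp hq)).unique hMain
  have f_smul : ∀ (c : ℝ), 0 ≤ c → ∀ p : X, 0 ≤ p → f (c • p) = c • f p := by
    intro c hc p hp
    rcases eq_or_lt_of_le hc with h0 | h0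
    · rw [← h0, zero_smul, zero_smul, f_zero]
    · have hMain : IsGLB (Set.range fun j => P j (c • p)) (c • f p) := by
        constructor
        · rintro _ ⟨j, rfl⟩
          show c • f p ≤ P j (c • p)
          rw [map_smul]
          exact smul_le_smul_of_nonneg_left (f_lb p hp j) hc
        · intro d hd
          have hd' : ∀ j, d ≤ c • P j p := fun j => by
            have h0 : d ≤ P j (c • p) := hd ⟨j, rfl⟩
            rwa [map_smul] at h0
          have hinv : c⁻¹ • d ≤ f p := by
            apply f_glb2 p hp
            intro j
            have := smul_le_smul_of_nonneg_left (hd' j) (inv_nonneg.mpr hc)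
            rwa [smul_smul, inv_mul_cancel₀ (ne_of_gt h0), one_smul] at this
          have := smul_le_smul_of_nonneg_left hinv hc
          rwa [smul_smul, mul_inv_cancel₀ (ne_of_gt h0), one_smul] at this
      exact (hf (c • p) (smul_nonneg hc hp)).unique hMain
  -- each P k fixes the infima
  have f_fix : ∀ (k : J) (x : X), 0 ≤ x → P k (f x) = f x := by
    intro k x hx
    have hg1dec : ∀ i j : J, i ≤ j → P k (P j x) ≤ P k (P i x) := by
      intro i j hij
      have d : (0:X) ≤ P i x - P j x := sub_nonneg.mpr (hmono hij x hx)
      have := hposP k _ d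
      rw [map_sub] at this
      exact sub_nonneg.mp this
    have hg2dec : ∀ i j : J, i ≤ j →
        P j x - P k (P j x) ≤ P i x - P k (P i x) := by
      intro i j hij
      have d : (0:X) ≤ P i x - P j x := sub_nonneg.mpr (hmono hij x hx)
      have h := hnegP k _ d
      rw [map_sub] at h
      -- h : P k (P i x) - P k (P j x) ≤ P i x - P j x
      have := sub_le_sub_right (sub_le_iff_le_add.mp h) (P k (P i x))
      calc P j x - P k (P j x)
          = (P k (P i x) - P k (P j x)) + (P j x - P k (P i x)) := by abel
        _ ≤ (P i x - P j x) + (P j x - P k (P i x)) := add_le_add_left h _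
        _ = P i x - P k (P i x) := by abel
    have hg1L : ∀ j, P k (f x) ≤ P k (P j x) := by
      intro j
      have d : (0:X) ≤ P j x - f x := sub_nonneg.mpr (f_lb x hx j)
      have := hposP k _ d
      rw [map_sub] at this
      exact sub_nonneg.mp this
    have hg2L : ∀ j, f x - P k (f x) ≤ P j x - P k (P j x) := by
      intro j
      have d : (0:X) ≤ P j x - f x := sub_nonneg.mpr (f_lb x hx j)
      have h := hnegP k _ d
      rw [map_sub] at h
      calc f x - P k (f x)
          = (P k (P j x) - P k (f x)) + (f x - P k (P j x)) := by abel
        _ ≤ (P j x - f x) + (f x - P k (P j x)) := add_le_add_left h _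
        _ = P j x - P k (P j x) := by abel
    obtain ⟨α, hα⟩ := glb_of_net hdc hdir (fun j => P k (P j x)) hg1dec _ hg1L
    obtain ⟨β, hβ⟩ := glb_of_net hdc hdir (fun j => P j x - P k (P j x)) hg2dec _ hg2L
    have hsum : IsGLB (Set.range fun j => P k (P j x) + (P j x - P k (P j x))) (α + β) :=
      glb_add hdir _ _ hg1dec hg2dec hα hβ
    have he : (fun j => P k (P j x) + (P j x - P k (P j x))) = fun j => P j x := by
      funext j; abel
    rw [he] at hsum
    have hab : α + β = f x := hsum.unique (hf x hx)
    have hαge : P k (f x) ≤ α := hα.2 (by rintro _ ⟨j, rfl⟩; exact hg1L j)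
    have hβge : f x - P k (f x) ≤ β := hβ.2 (by rintro _ ⟨j, rfl⟩; exact hg2L j)
    have hαeq : α = P k (f x) := by
      have h1 : (0:X) ≤ α - P k (f x) := sub_nonneg.mpr hαge
      have h2 : (0:X) ≤ β - (f x - P k (f x)) := sub_nonneg.mpr hβge
      have h3 : (α - P k (f x)) + (β - (f x - P k (f x))) = 0 := by
        rw [show (α - P k (f x)) + (β - (f x - P k (f x))) = (α + β) - f x from by abel,
          hab, sub_self]
      have h4 : α - P k (f x) ≤ 0 := by
        calc α - P k (f x) = (α - P k (f x)) + 0 := by abel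
          _ ≤ (α - P k (f x)) + (β - (f x - P k (f x))) := add_le_add_right h2 _
          _ = 0 := h3
      have h5 : α - P k (f x) = 0 := le_antisymm h4 h1
      exact sub_eq_zero.mp h5
    -- f x is also a GLB of the net P k (P j x)
    have hfxglb : IsGLB (Set.range fun j => P k (P j x)) (f x) := by
      constructor
      · rintro _ ⟨j, rfl⟩
        obtain ⟨m, hkm, hjm⟩ := hdir k j
        have w0 : (0:X) ≤ P k (P j x) := hposP k _ (hposP j x hx)
        have e1 : P m (P k (P j x)) = P m x := by rw [comm2 hkm, comm2 hjm]
        have h := hnegP m _ w0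
        rw [e1] at h
        exact le_trans (f_lb x hx m) h
      · intro c hc
        apply f_glb2 x hx
        intro j
        obtain ⟨m, hkm, hjm⟩ := hdir k j
        have h1 : c ≤ P k (P m x) := hc ⟨m, rfl⟩
        rw [comm1 hkm] at h1
        exact le_trans h1 (hmono hjm x hx)
    have h6 := hα.unique hfxglb
    rw [← hαeq]
    exact h6
  -- P₀ absorbs each P k on the right
  have f_invk : ∀ (k : J) (x : X), 0 ≤ x → f (P k x) = f x := by
    intro k x hx
    have hfx : IsGLB (Set.range fun j => P j (P k x)) (f x) := by
      constructor
      · rintro _ ⟨j, rfl⟩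
        obtain ⟨m, hkm, hjm⟩ := hdir k j
        have w0 : (0:X) ≤ P j (P k x) := hposP j _ (hposP k x hx)
        have e1 : P m (P j (P k x)) = P m x := by rw [comm2 hjm, comm2 hkm]
        have h := hnegP m _ w0
        rw [e1] at h
        exact le_trans (f_lb x hx m) h
      · intro c hc
        apply f_glb2 x hx
        intro j
        obtain ⟨m, hkm, hjm⟩ := hdir k j
        have h1 : c ≤ P m (P k x) := hc ⟨m, rfl⟩
        rw [comm2 hkm] at h1
        exact le_trans h1 (hmono hjm x hx)
    exact (hf (P k x) (hposP k x hx)).unique hfx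
  -- construction of P₀
  have welldef : ∀ p q p' q' : X, 0 ≤ p → 0 ≤ q → 0 ≤ p' → 0 ≤ q' →
      p - q = p' - q' → f p - f q = f p' - f q' := by
    intro p q p' q' hp hq hp' hq' h
    have hadd : p + q' = p' + q := sub_eq_sub_iff_add_eq_add.mp h
    have h1 : f p + f q' = f p' + f q := by
      rw [← f_add p q' hp hq', ← f_add p' q hp' hq, hadd]
    exact sub_eq_sub_iff_add_eq_add.mpr h1
  have g_eq : ∀ x p q : X, 0 ≤ p → 0 ≤ q → x = p - q →
      f (dp x) - f (dq x) = f p - f q := by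
    intro x p q hp hq hx
    exact welldef _ _ _ _ (hdp x) (hdq x) hp hq (by rw [← hde x, hx])
  have g_pos : ∀ x : X, 0 ≤ x → f (dp x) - f (dq x) = f x := by
    intro x hx
    rw [g_eq x x 0 hx le_rfl (by abel), f_zero, sub_zero]
  have g_add : ∀ x y : X, f (dp (x + y)) - f (dq (x + y)) =
      (f (dp x) - f (dq x)) + (f (dp y) - f (dq y)) := by
    intro x y
    have h1 : f (dp (x + y)) - f (dq (x + y)) = f (dp x + dp y) - f (dq x + dq y) := by
      apply g_eq _ _ _ (add_nonneg (hdp x) (hdp y)) (add_nonneg (hdq x) (hdq y))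
      conv_lhs => rw [hde x, hde y]
      abel
    rw [h1, f_add _ _ (hdp x) (hdp y), f_add _ _ (hdq x) (hdq y)]
    abel
  have g_smul : ∀ (c : ℝ) (x : X), f (dp (c • x)) - f (dq (c • x)) =
      c • (f (dp x) - f (dq x)) := by
    intro c x
    rcases le_or_gt 0 c with hc | hc
    · have h1 : f (dp (c • x)) - f (dq (c • x)) = f (c • dp x) - f (c • dq x) := by
        apply g_eq _ _ _ (smul_nonneg hc (hdp x)) (smul_nonneg hc (hdq x))
        conv_lhs => rw [hde x]
        rw [smul_sub]
      rw [h1, f_smul c hc _ (hdp x), f_smul c hc _ (hdq x), smul_sub]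
    · have hc' : (0:ℝ) ≤ -c := by linarith
      have h1 : f (dp (c • x)) - f (dq (c • x)) = f ((-c) • dq x) - f ((-c) • dp x) := by
        apply g_eq _ _ _ (smul_nonneg hc' (hdq x)) (smul_nonneg hc' (hdp x))
        conv_lhs => rw [hde x]
        rw [smul_sub, neg_smul, neg_smul]
        abel
      rw [h1, f_smul _ hc' _ (hdq x), f_smul _ hc' _ (hdp x), neg_smul, neg_smul,
        smul_sub]
      abel
  let P₀ : X →ₗ[ℝ] X :=
    { toFun := fun x => f (dp x) - f (dq x)
      map_add' := g_add
      map_smul' := fun c x => by simpa using g_smul c x }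
  have hP₀app : ∀ x : X, P₀ x = f (dp x) - f (dq x) := fun x => rfl
  have hP₀pos : ∀ x : X, 0 ≤ x → P₀ x = f x := by
    intro x hx; rw [hP₀app, g_pos x hx]
  have pfix : ∀ (k : J) (x : X), P k (P₀ x) = P₀ x := by
    intro k x
    rw [hP₀app, map_sub, f_fix k _ (hdp x), f_fix k _ (hdq x)]
  refine ⟨P₀, ?_, ?_, ?_⟩
  · -- band projection
    apply bp_of hX P₀
    · -- idempotent
      apply LinearMap.ext
      intro x
      have key : ∀ y : X, 0 ≤ y → P₀ (P₀ y) = P₀ y := by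
        intro y hy
        rw [hP₀pos y hy, hP₀pos _ (f_nonneg y hy)]
        have hconst : IsGLB (Set.range fun j => P j (f y)) (f y) := by
          constructor
          · rintro _ ⟨j, rfl⟩
            show f y ≤ P j (f y)
            rw [f_fix j y hy]
          · intro c hc
            have h0 : c ≤ P j₀ (f y) := hc ⟨j₀, rfl⟩
            rwa [f_fix j₀ y hy] at h0
        exact (hf (f y) (f_nonneg y hy)).unique hconst
      rw [LinearMap.comp_apply]
      calc P₀ (P₀ x) = P₀ (P₀ (dp x)) - P₀ (P₀ (dq x)) := by
            rw [← map_sub, ← map_sub, ← hde x]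
        _ = P₀ (dp x) - P₀ (dq x) := by rw [key _ (hdp x), key _ (hdq x)]
        _ = P₀ x := by rw [← map_sub, ← hde x]
    · -- positive
      intro x hx
      rw [hP₀pos x hx]
      exact f_nonneg x hx
    · -- dominated by identity
      intro x hx
      rw [hP₀pos x hx]
      exact le_trans (f_lb x hx j₀) (hnegP j₀ x hx)
  · -- pointwise infimum
    intro x hx
    rw [hP₀pos x hx]
    exact hf x hx
  · -- range
    ext x
    simp only [Set.mem_iInter, Set.mem_range]
    constructor
    · rintro ⟨y, rfl⟩ j
      exact ⟨P₀ y, pfix j y⟩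
    · intro h
      have hfixx : ∀ j, P j x = x := by
        intro j
        obtain ⟨w, hw⟩ := h j
        rw [← hw]
        exact hidem j w
      have trans : IsGLB (Set.range fun j => x + P j (dq x)) (x + f (dq x)) := by
        constructor
        · rintro _ ⟨j, rfl⟩
          exact add_le_add_right (f_lb _ (hdq x) j) x
        · intro c hc
          have h1 : c - x ≤ f (dq x) := by
            apply f_glb2 _ (hdq x)
            intro j
            have h0 : c ≤ x + P j (dq x) := hc ⟨j, rfl⟩
            exact sub_le_iff_le_add'.mpr h0
          calc c = (c - x) + x := by abel
            _ ≤ f (dq x) + x := add_le_add_left h1 x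
            _ = x + f (dq x) := by abel
      have he : (fun j => P j (dp x)) = fun j => x + P j (dq x) := by
        funext j
        have h2 : P j (dp x) - P j (dq x) = x := by
          rw [← map_sub, ← hde x, hfixx j]
        exact sub_eq_iff_eq_add.mp h2
      have h3 : IsGLB (Set.range fun j => P j (dp x)) (x + f (dq x)) := by
        rw [he]; exact trans
      have h4 : f (dp x) = x + f (dq x) := (hf _ (hdp x)).unique h3
      refine ⟨x, ?_⟩
      rw [hP₀app, h4]
      abel
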